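/- For every real t, every integer n with 1 ≤ n ≤ m, and every (n′,r′) ∈ S_m, the sum over r from 0 to n of the matrix-exponential entries exp(tQ)_{(n,r),(n′,r′)} equals exp(tG)_{n,n′}. (Marginalizing the allele count out of exp(tQ) recovers Tavaré's lineage-count transition matrix exp(tG); in particular the sum is independent of r′.) -/

import Mathlib

open Finset

/-- The state space `S_m = {(n,r) : 1 ≤ n ≤ m, 0 ≤ r ≤ n}`, realised as a subtype of
`Fin (m+1) × Fin (m+1)` (first coordinate `n`, second coordinate `r`). -/
abbrev SmIdx (m : ℕ) := {p : Fin (m + 1) × Fin (m + 1) // 1 ≤ (p.1 : ℕ) ∧ (p.2 : ℕ) ≤ (p.1 : ℕ)}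

/-- The entry of the matrix `Q` in row `(n,r)` and column `(n',r')`:
`Q_{(n,r),(n,r-1)} = (n-r+1)v`, `Q_{(n,r),(n,r+1)} = (r+1)u`,
`Q_{(n,r),(n-1,r)} = (n-1-r)n/θ`, `Q_{(n,r),(n-1,r-1)} = (r-1)n/θ`,
`Q_{(n,r),(n,r)} = -n(n-1)/θ - (n-r)v - ru`, and all other entries zero. -/
noncomputable def QEnt (θ u v : ℝ) (n r n' r' : ℕ) : ℝ :=
  if n' = n ∧ r' + 1 = r then ((n : ℝ) - (r : ℝ) + 1) * v
  else if n' = n ∧ r' = r + 1 then ((r : ℝ) + 1) * u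
  else if n' + 1 = n ∧ r' = r then ((n : ℝ) - 1 - (r : ℝ)) * (n : ℝ) / θ
  else if n' + 1 = n ∧ r' + 1 = r then ((r : ℝ) - 1) * (n : ℝ) / θ
  else if n' = n ∧ r' = r then
    -((n : ℝ) * ((n : ℝ) - 1) / θ) - ((n : ℝ) - (r : ℝ)) * v - (r : ℝ) * u
  else 0

/-- The matrix `Q`, rows and columns indexed by `S_m`. -/
noncomputable def coalQ (m : ℕ) (θ u v : ℝ) : Matrix (SmIdx m) (SmIdx m) ℝ :=
  fun p q => QEnt θ u v (p.1.1 : ℕ) (p.1.2 : ℕ) (q.1.1 : ℕ) (q.1.2 : ℕ)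

/-- The index set `{1, …, m}`, realised as a subtype of `Fin (m + 1)`. -/
abbrev CoalIdx (m : ℕ) := {i : Fin (m + 1) // 1 ≤ (i : ℕ)}

/-- The generator `G` of the pure-death coalescent lineage-count chain on `{1, …, m}`:
`G n n = -n(n-1)/θ`, `G n (n-1) = n(n-1)/θ`, and all other entries zero. -/
noncomputable def coalG (m : ℕ) (θ : ℝ) : Matrix (CoalIdx m) (CoalIdx m) ℝ :=
  fun i j =>
    if (j.1 : ℕ) + 1 = (i.1 : ℕ) then
      ((i.1 : ℕ) : ℝ) * (((i.1 : ℕ) : ℝ) - 1) / θ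
    else if (j.1 : ℕ) = (i.1 : ℕ) then
      -(((i.1 : ℕ) : ℝ) * (((i.1 : ℕ) : ℝ) - 1) / θ)
    else 0

noncomputable def lumpM (m : ℕ) : Matrix (CoalIdx m) (SmIdx m) ℝ :=
  fun i p => if (p.1.1 : ℕ) = (i.1 : ℕ) then 1 else 0

open NormedSpace in
theorem exp_intertwine {ι κ : Type*} [Fintype ι] [DecidableEq ι] [Fintype κ] [DecidableEq κ]
    (L : Matrix κ ι ℝ) (A : Matrix ι ι ℝ) (B : Matrix κ κ ℝ) (h : L * A = B * L) :
    L * exp A = exp B * L := by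
  letI : SeminormedRing (Matrix ι ι ℝ) := Matrix.linftyOpSemiNormedRing
  letI : NormedRing (Matrix ι ι ℝ) := Matrix.linftyOpNormedRing
  letI : NormedAlgebra ℝ (Matrix ι ι ℝ) := Matrix.linftyOpNormedAlgebra
  letI : SeminormedRing (Matrix κ κ ℝ) := Matrix.linftyOpSemiNormedRing
  letI : NormedRing (Matrix κ κ ℝ) := Matrix.linftyOpNormedRing
  letI : NormedAlgebra ℝ (Matrix κ κ ℝ) := Matrix.linftyOpNormedAlgebra
  have hpow : ∀ k : ℕ, L * A ^ k = B ^ k * L := by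
    intro k
    induction k with
    | zero => simp
    | succ k ih =>
      rw [pow_succ, ← Matrix.mul_assoc, ih, Matrix.mul_assoc, h, ← Matrix.mul_assoc, ← pow_succ]
  let φ : Matrix ι ι ℝ →ₗ[ℝ] Matrix κ ι ℝ :=
    { toFun := fun X => L * X
      map_add' := fun X Y => Matrix.mul_add _ _ _
      map_smul' := fun c X => Matrix.mul_smul _ _ _ }
  let ψ : Matrix κ κ ℝ →ₗ[ℝ] Matrix κ ι ℝ :=
    { toFun := fun X => X * L
      map_add' := fun X Y => Matrix.add_mul _ _ _
      map_smul' := fun c X => Matrix.smul_mul _ _ _ }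
  have hφ : Continuous φ := φ.continuous_of_finiteDimensional
  have hψ : Continuous ψ := ψ.continuous_of_finiteDimensional
  have hA : Summable fun k : ℕ => ((k.factorial : ℝ))⁻¹ • A ^ k := expSeries_summable' A
  have hB : Summable fun k : ℕ => ((k.factorial : ℝ))⁻¹ • B ^ k := expSeries_summable' B
  have key : L * exp A = exp B * L := by
    rw [exp_eq_tsum (𝕂 := ℝ), exp_eq_tsum (𝕂 := ℝ)]
    calc L * ∑' k : ℕ, ((k.factorial : ℝ))⁻¹ • A ^ k
        = φ (∑' k : ℕ, ((k.factorial : ℝ))⁻¹ • A ^ k) := rfl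
      _ = ∑' k : ℕ, φ (((k.factorial : ℝ))⁻¹ • A ^ k) := ((hA.hasSum.map φ hφ).tsum_eq).symm
      _ = ∑' k : ℕ, ψ (((k.factorial : ℝ))⁻¹ • B ^ k) := by
          refine tsum_congr fun k => ?_
          show L * (((k.factorial : ℝ))⁻¹ • A ^ k) = (((k.factorial : ℝ))⁻¹ • B ^ k) * L
          rw [Matrix.mul_smul, hpow k, Matrix.smul_mul]
      _ = ψ (∑' k : ℕ, ((k.factorial : ℝ))⁻¹ • B ^ k) := (hB.hasSum.map ψ hψ).tsum_eq
      _ = (∑' k : ℕ, ((k.factorial : ℝ))⁻¹ • B ^ k) * L := rfl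
  exact key

lemma sum_shift (m r' : ℕ) (c : ℝ) (hr : r' ≤ m + 1) (hc : r' = 0 → c = 0) :
    ∑ k ∈ Finset.range (m + 2), (if k + 1 = r' then c else 0) = c := by
  rcases r' with _ | s
  · simp [hc rfl]
  · simp only [add_left_inj]
    rw [Finset.sum_ite_eq' (Finset.range (m + 2)) s (fun _ => c),
      if_pos (Finset.mem_range.mpr (by omega))]

lemma rowsum_eq (m : ℕ) (θ u v : ℝ) (ni n' r' : ℕ) (hni1 : 1 ≤ ni) (hnim : ni ≤ m)
    (hn'1 : 1 ≤ n') (hn'm : n' ≤ m) (hr' : r' ≤ n') :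
    ∑ k ∈ Finset.range (m + 2), (if k ≤ ni then QEnt θ u v ni k n' r' else 0)
      = (if n' + 1 = ni then (ni : ℝ) * ((ni : ℝ) - 1) / θ
         else if n' = ni then -((ni : ℝ) * ((ni : ℝ) - 1) / θ) else 0) := by
  by_cases hd : n' = ni
  · subst hd
    rw [if_neg (by omega), if_pos rfl]
    have hpt : ∀ k, (if k ≤ n' then QEnt θ u v n' k n' r' else 0)
        = (if k = r' then
            (-((n' : ℝ) * ((n' : ℝ) - 1) / θ) - ((n' : ℝ) - (r' : ℝ)) * v - (r' : ℝ) * u) else 0)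
          + (if k = r' + 1 then ((n' : ℝ) - (r' : ℝ)) * v else 0)
          + (if k + 1 = r' then (r' : ℝ) * u else 0) := by
      intro k
      rcases eq_or_ne k r' with h1 | h1
      · subst h1
        simp only [QEnt, eq_self_iff_true, true_and, and_true, if_true]
        split_ifs <;> first | (exfalso; omega) | (push_cast; ring)
      · rcases eq_or_ne k (r' + 1) with h2 | h2
        · subst h2
          rcases eq_or_ne r' n' with hb | hb
          · subst hb
            simp only [QEnt, eq_self_iff_true, true_and, and_true, if_true]
            split_ifs <;> first | (exfalso; omega) | (push_cast; ring)
          · simp only [QEnt, eq_self_iff_true, true_and, and_true, if_true]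
            split_ifs <;> first | (exfalso; omega) | (push_cast; ring)
        · rcases eq_or_ne (k + 1) r' with h3 | h3
          · subst h3
            simp only [QEnt, eq_self_iff_true, true_and, and_true, if_true]
            split_ifs <;> first | (exfalso; omega) | (push_cast; ring)
          · simp only [QEnt, eq_self_iff_true, true_and, and_true, if_true]
            split_ifs <;> first | (exfalso; omega) | (push_cast; ring)
    rw [Finset.sum_congr rfl (fun k _ => hpt k), Finset.sum_add_distrib, Finset.sum_add_distrib,
      Finset.sum_ite_eq' (Finset.range (m + 2)) r',
      Finset.sum_ite_eq' (Finset.range (m + 2)) (r' + 1),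
      sum_shift m r' _ (by omega) (fun h => by subst h; push_cast; ring),
      if_pos (Finset.mem_range.mpr (by omega)), if_pos (Finset.mem_range.mpr (by omega))]
    ring
  · by_cases hd2 : n' + 1 = ni
    · subst hd2
      rw [if_pos rfl]
      have hpt : ∀ k, (if k ≤ n' + 1 then QEnt θ u v (n' + 1) k n' r' else 0)
          = (if k = r' then ((n' : ℝ) + 1 - 1 - (r' : ℝ)) * ((n' : ℝ) + 1) / θ else 0)
            + (if k = r' + 1 then (r' : ℝ) * ((n' : ℝ) + 1) / θ else 0) := by
        intro k
        rcases eq_or_ne k r' with h1 | h1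
        · subst h1
          simp only [QEnt, eq_self_iff_true, true_and, and_true, if_true]
          split_ifs <;> first | (exfalso; omega) | (push_cast; ring)
        · rcases eq_or_ne k (r' + 1) with h2 | h2
          · subst h2
            simp only [QEnt, eq_self_iff_true, true_and, and_true, if_true]
            split_ifs <;> first | (exfalso; omega) | (push_cast; ring)
          · simp only [QEnt, eq_self_iff_true, true_and, and_true, if_true]
            split_ifs <;> first | (exfalso; omega) | (push_cast; ring)
      rw [Finset.sum_congr rfl (fun k _ => hpt k), Finset.sum_add_distrib,
        Finset.sum_ite_eq' (Finset.range (m + 2)) r',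
        Finset.sum_ite_eq' (Finset.range (m + 2)) (r' + 1),
        if_pos (Finset.mem_range.mpr (by omega)), if_pos (Finset.mem_range.mpr (by omega))]
      push_cast
      ring
    · rw [if_neg hd2, if_neg hd]
      refine Finset.sum_eq_zero fun k _ => ?_
      simp only [QEnt, eq_self_iff_true, true_and, and_true, if_true]
      split_ifs <;> first | (exfalso; omega) | rfl

lemma lump_comm (m : ℕ) (θ u v : ℝ) :
    lumpM m * coalQ m θ u v = coalG m θ * lumpM m := by
  ext i q
  rw [Matrix.mul_apply, Matrix.mul_apply]
  have hL : ∑ p : SmIdx m, lumpM m i p * coalQ m θ u v p q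
      = ∑ k ∈ Finset.range (m + 2),
          (if k ≤ (i.1 : ℕ) then QEnt θ u v (i.1 : ℕ) k (q.1.1 : ℕ) (q.1.2 : ℕ) else 0) := by
    simp only [lumpM, coalQ, ite_mul, one_mul, zero_mul]
    rw [← Finset.sum_filter]
    have hset : (Finset.range (m + 2)).filter (fun k => k ≤ (i.1 : ℕ))
        = Finset.range ((i.1 : ℕ) + 1) := by
      ext k
      simp only [Finset.mem_filter, Finset.mem_range]
      have := i.1.isLt
      omega
    have hrhs : ∑ k ∈ Finset.range (m + 2),
          (if k ≤ (i.1 : ℕ) then QEnt θ u v (i.1 : ℕ) k (q.1.1 : ℕ) (q.1.2 : ℕ) else 0)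
        = ∑ k ∈ Finset.range ((i.1 : ℕ) + 1),
            QEnt θ u v (i.1 : ℕ) k (q.1.1 : ℕ) (q.1.2 : ℕ) := by
      rw [← Finset.sum_filter, hset]
    rw [hrhs]
    refine Finset.sum_nbij' (fun p => ((p.1.2 : ℕ)))
      (fun k => ⟨(i.1, ⟨min k (i.1 : ℕ), lt_of_le_of_lt (min_le_right _ _) i.1.isLt⟩),
        ⟨i.2, min_le_right _ _⟩⟩) ?_ ?_ ?_ ?_ ?_
    · intro p hp
      simp only [Finset.mem_filter, Finset.mem_univ, true_and] at hp
      have := p.2.2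
      simp only [Finset.mem_filter, Finset.mem_range]
      omega
    · intro k hk
      simp only [Finset.mem_filter, Finset.mem_univ, true_and]
    · intro p hp
      simp only [Finset.mem_filter, Finset.mem_univ, true_and] at hp
      have h2 := p.2.2
      apply Subtype.ext
      apply Prod.ext
      · exact Fin.ext hp.symm
      · exact Fin.ext (by simp; omega)
    · intro k hk
      simp only [Finset.mem_filter, Finset.mem_range] at hk
      simp
      omega
    · intro p hp
      simp only [Finset.mem_filter, Finset.mem_univ, true_and] at hp
      rw [hp]
  rw [hL, rowsum_eq m θ u v (i.1 : ℕ) (q.1.1 : ℕ) (q.1.2 : ℕ) i.2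
    (by have := i.1.isLt; omega) q.2.1 (by have := q.1.1.isLt; omega) q.2.2]
  rw [Finset.sum_eq_single (⟨q.1.1, q.2.1⟩ : CoalIdx m)]
  · simp [lumpM, coalG]
  · intro j _ hj
    have hne : ¬((q.1.1 : ℕ) = (j.1 : ℕ)) := fun h => hj (Subtype.ext (Fin.ext h.symm))
    simp [lumpM, hne]
  · intro h; exact absurd (Finset.mem_univ _) h


/-- Marginalizing the allele count out of `exp (t Q)` recovers Tavaré's lineage-count transition
matrix `exp (t G)`: for every real `t`, every `n` with `1 ≤ n ≤ m`, and every `(n',r') ∈ S_m`,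
`∑_{r=0}^{n} exp(tQ)_{(n,r),(n',r')} = exp(tG)_{n,n'}`. -/
theorem stmt3 (m : ℕ) (hm : 1 ≤ m) (θ u v : ℝ) (hθ : 0 < θ) (hu : 0 ≤ u) (hv : 0 ≤ v)
    (t : ℝ) (n : ℕ) (hn : 1 ≤ n) (hnm : n ≤ m) (q : SmIdx m) :
    ∑ p ∈ Finset.univ.filter (fun p : SmIdx m => (p.1.1 : ℕ) = n),
        NormedSpace.exp (t • coalQ m θ u v) p q =
      NormedSpace.exp (t • coalG m θ) ⟨⟨n, Nat.lt_succ_of_le hnm⟩, hn⟩ ⟨q.1.1, q.2.1⟩ := by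
  have hcomm : lumpM m * (t • coalQ m θ u v) = (t • coalG m θ) * lumpM m := by
    rw [Matrix.mul_smul, Matrix.smul_mul, lump_comm]
  have hexp := exp_intertwine (lumpM m) (t • coalQ m θ u v) (t • coalG m θ) hcomm
  set i₀ : CoalIdx m := ⟨⟨n, Nat.lt_succ_of_le hnm⟩, hn⟩ with hi₀
  have h1 : (lumpM m * NormedSpace.exp (t • coalQ m θ u v)) i₀ q
      = (NormedSpace.exp (t • coalG m θ) * lumpM m) i₀ q := by rw [hexp]
  rw [Matrix.mul_apply, Matrix.mul_apply] at h1
  have hL : ∑ p : SmIdx m, lumpM m i₀ p * NormedSpace.exp (t • coalQ m θ u v) p q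
      = ∑ p ∈ Finset.univ.filter (fun p : SmIdx m => (p.1.1 : ℕ) = n),
          NormedSpace.exp (t • coalQ m θ u v) p q := by
    rw [Finset.sum_filter]
    refine Finset.sum_congr rfl fun p _ => ?_
    simp [lumpM, hi₀, ite_mul]
  have hR : ∑ j : CoalIdx m, NormedSpace.exp (t • coalG m θ) i₀ j * lumpM m j q
      = NormedSpace.exp (t • coalG m θ) i₀ ⟨q.1.1, q.2.1⟩ := by
    rw [Finset.sum_eq_single (⟨q.1.1, q.2.1⟩ : CoalIdx m)]
    · simp [lumpM]
    · intro j _ hj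
      have hne : ¬((q.1.1 : ℕ) = (j.1 : ℕ)) := fun h => hj (Subtype.ext (Fin.ext h.symm))
      simp [lumpM, hne]
    · intro h; exact absurd (Finset.mem_univ _) h
  rw [hL, hR] at h1
  exact h1
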